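/- Let n ≥ 1 and let τ₁ < τ₂ < ⋯ < τₙ be rational numbers. Then there exists a monotone function δ : ℚ → ℚ such that: (i) δ τᵢ = τᵢ for every i; (ii) for every τ : ℚ and every i, τ < τᵢ ↔ δ τ < τᵢ and τᵢ < τ ↔ τᵢ < δ τ (hence also τ = τᵢ ↔ δ τ = τᵢ); and (iii) the range of δ contains at most 2 * n + 1 elements. -/

import Mathlib

private def Tf (n : ℕ) (hn : 1 ≤ n) (τ : Fin n → ℚ) : ℕ → ℚ :=
  fun j => τ ⟨min j (n - 1), by omega⟩

private def repF (n : ℕ) (hn : 1 ≤ n) (τ : Fin n → ℚ) : ℕ → ℚ := fun k =>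
  if k = 0 then Tf n hn τ 0 - 1
  else if 2 * n ≤ k then Tf n hn τ (n - 1) + 1
  else if k % 2 = 1 then Tf n hn τ (k / 2)
  else (Tf n hn τ (k / 2 - 1) + Tf n hn τ (k / 2)) / 2

private def iotaF (n : ℕ) (τ : Fin n → ℚ) (x : ℚ) : ℕ :=
  (Finset.univ.filter fun j : Fin n => τ j ≤ x).card +
    (Finset.univ.filter fun j : Fin n => τ j < x).card

/-- Abstraction of timestamps: given deadlines `τ 0 < … < τ (n-1)`
(`n ≥ 1`), there is a monotone discretization `δ : ℚ → ℚ` fixing every deadline,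
preserving all strict comparisons (hence also equality) with each deadline, and
whose range has at most `2 * n + 1` elements. -/
theorem timestamp_discretization (n : ℕ) (hn : 1 ≤ n) (τ : Fin n → ℚ)
    (hτ : StrictMono τ) :
    ∃ δ : ℚ → ℚ, Monotone δ ∧ (∀ i : Fin n, δ (τ i) = τ i) ∧
      (∀ (x : ℚ) (i : Fin n),
        (x < τ i ↔ δ x < τ i) ∧ (τ i < x ↔ τ i < δ x) ∧ (x = τ i ↔ δ x = τ i)) ∧
      ∃ s : Finset ℚ, (∀ x : ℚ, δ x ∈ s) ∧ s.card ≤ 2 * n + 1 := by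
  set T := Tf n hn τ with hT
  set rep := repF n hn τ with hrep
  set ι := iotaF n τ with hι
  -- basic facts about T
  have T_eq : ∀ i : Fin n, T (i : ℕ) = τ i := by
    intro i
    have : min (i : ℕ) (n - 1) = (i : ℕ) := by omega
    simp [hT, Tf, this]
  have T_lt : ∀ a b : ℕ, a < b → b ≤ n - 1 → T a < T b := by
    intro a b hab hb
    have h1 : min a (n - 1) = a := by omega
    have h2 : min b (n - 1) = b := by omega
    simp only [hT, Tf]
    exact hτ (by simp [Fin.mk_lt_mk, h1, h2, hab])
  -- step lemma for rep
  have rep_lt_succ : ∀ k, k < 2 * n → rep k < rep (k + 1) := by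
    intro k hk
    rcases Nat.eq_zero_or_pos k with hk0 | hk0
    · subst hk0
      have h1 : ¬ (2 * n ≤ 1) := by omega
      simp only [hrep, repF, if_pos rfl, if_neg (by omega : ¬ (1 : ℕ) = 0), if_neg h1,
        if_pos (by norm_num : 1 % 2 = 1)]
      norm_num
    · by_cases htop : k + 1 = 2 * n
      · -- rep k = T (n-1), rep (k+1) = T (n-1) + 1
        have hk2 : k % 2 = 1 := by omega
        have hkd : k / 2 = n - 1 := by omega
        simp only [hrep, repF, if_neg (by omega : ¬ k = 0), if_neg (by omega : ¬ 2 * n ≤ k),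
          if_pos hk2, if_neg (by omega : ¬ k + 1 = 0), if_pos (by omega : 2 * n ≤ k + 1), hkd]
        linarith
      · have hk1 : k + 1 < 2 * n := by omega
        by_cases hpar : k % 2 = 1
        · -- rep k = T (k/2), rep (k+1) = midpoint of T (k/2) and T (k/2+1)
          have h1 : (k + 1) % 2 = 1 → False := by omega
          have hdiv : (k + 1) / 2 = k / 2 + 1 := by omega
          have hdiv2 : (k + 1) / 2 - 1 = k / 2 := by omega
          simp only [hrep, repF, if_neg (by omega : ¬ k = 0), if_neg (by omega : ¬ 2 * n ≤ k),
            if_pos hpar, if_neg (by omega : ¬ k + 1 = 0), if_neg (by omega : ¬ 2 * n ≤ k + 1),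
            if_neg (fun h => h1 h), hdiv, hdiv2, Nat.add_sub_cancel]
          have : T (k / 2) < T (k / 2 + 1) := T_lt _ _ (by omega) (by omega)
          linarith
        · -- rep k = midpoint of T (k/2-1) and T (k/2), rep (k+1) = T ((k+1)/2) = T (k/2)
          have hdiv : (k + 1) / 2 = k / 2 := by omega
          simp only [hrep, repF, if_neg (by omega : ¬ k = 0), if_neg (by omega : ¬ 2 * n ≤ k),
            if_neg hpar, if_neg (by omega : ¬ k + 1 = 0), if_neg (by omega : ¬ 2 * n ≤ k + 1),
            if_pos (by omega : (k + 1) % 2 = 1), hdiv]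
          have : T (k / 2 - 1) < T (k / 2) := T_lt _ _ (by omega) (by omega)
          linarith
  have rep_flat : ∀ k, 2 * n ≤ k → rep k = T (n - 1) + 1 := by
    intro k hk
    simp only [hrep, repF, if_neg (by omega : ¬ k = 0), if_pos hk, hT]
  have rep_mono : Monotone rep := by
    apply monotone_nat_of_le_succ
    intro k
    by_cases hk : k < 2 * n
    · exact (rep_lt_succ k hk).le
    · rw [rep_flat k (by omega), rep_flat (k + 1) (by omega)]
  have rep_lt : ∀ b a : ℕ, a < b → b ≤ 2 * n → rep a < rep b := by
    intro b
    induction b with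
    | zero => intro a h _; omega
    | succ b ih =>
      intro a hab hb
      rcases Nat.lt_succ_iff_lt_or_eq.mp hab with h | h
      · exact (ih a h (by omega)).trans (rep_lt_succ b (by omega))
      · subst h; exact rep_lt_succ a (by omega)
  have rep_fix : ∀ i : Fin n, rep (2 * (i : ℕ) + 1) = τ i := by
    intro i
    have hi : (i : ℕ) < n := i.isLt
    have hdiv : (2 * (i : ℕ) + 1) / 2 = (i : ℕ) := by omega
    simp only [hrep, repF, if_neg (by omega : ¬ 2 * (i : ℕ) + 1 = 0),
      if_neg (by omega : ¬ 2 * n ≤ 2 * (i : ℕ) + 1), if_pos (by omega : (2 * (i : ℕ) + 1) % 2 = 1),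
      hdiv]
    exact T_eq i
  -- iota facts
  have ι_le : ∀ x, ι x ≤ 2 * n := by
    intro x
    have h1 := Finset.card_filter_le (Finset.univ : Finset (Fin n)) (fun j => τ j ≤ x)
    have h2 := Finset.card_filter_le (Finset.univ : Finset (Fin n)) (fun j => τ j < x)
    simp only [Finset.card_univ, Fintype.card_fin] at h1 h2
    simp only [hι, iotaF]; omega
  have ι_mono : ∀ x y : ℚ, x ≤ y → ι x ≤ ι y := by
    intro x y hxy
    have h1 : (Finset.univ.filter fun j : Fin n => τ j ≤ x) ⊆
        (Finset.univ.filter fun j : Fin n => τ j ≤ y) := by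
      intro j hj
      simp only [Finset.mem_filter, Finset.mem_univ, true_and] at hj ⊢
      exact le_trans hj hxy
    have h2 : (Finset.univ.filter fun j : Fin n => τ j < x) ⊆
        (Finset.univ.filter fun j : Fin n => τ j < y) := by
      intro j hj
      simp only [Finset.mem_filter, Finset.mem_univ, true_and] at hj ⊢
      exact lt_of_lt_of_le hj hxy
    have := Finset.card_le_card h1
    have := Finset.card_le_card h2
    simp only [hι, iotaF]; omega
  have ι_lt_iff : ∀ (x : ℚ) (i : Fin n), x < τ i ↔ ι x < 2 * (i : ℕ) + 1 := by
    intro x i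
    constructor
    · intro hx
      have h1 : (Finset.univ.filter fun j : Fin n => τ j ≤ x) ⊆ Finset.Iio i := by
        intro j hj
        simp only [Finset.mem_filter] at hj
        simp only [Finset.mem_Iio]
        exact hτ.lt_iff_lt.mp (lt_of_le_of_lt hj.2 hx)
      have h2 : (Finset.univ.filter fun j : Fin n => τ j < x) ⊆ Finset.Iio i := by
        intro j hj
        simp only [Finset.mem_filter] at hj
        simp only [Finset.mem_Iio]
        exact hτ.lt_iff_lt.mp (lt_trans hj.2 hx)
      have c1 := Finset.card_le_card h1
      have c2 := Finset.card_le_card h2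
      rw [Fin.card_Iio] at c1 c2
      simp only [hι, iotaF]; omega
    · intro hx
      by_contra hcon
      push_neg at hcon
      have h1 : Finset.Iic i ⊆ (Finset.univ.filter fun j : Fin n => τ j ≤ x) := by
        intro j hj
        simp only [Finset.mem_Iic] at hj
        simp only [Finset.mem_filter, Finset.mem_univ, true_and]
        exact le_trans (hτ.monotone hj) hcon
      have h2 : Finset.Iio i ⊆ (Finset.univ.filter fun j : Fin n => τ j < x) := by
        intro j hj
        simp only [Finset.mem_Iio] at hj
        simp only [Finset.mem_filter, Finset.mem_univ, true_and]
        exact lt_of_lt_of_le (hτ hj) hcon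
      have c1 := Finset.card_le_card h1
      have c2 := Finset.card_le_card h2
      rw [Fin.card_Iic] at c1
      rw [Fin.card_Iio] at c2
      simp only [hι, iotaF] at hx; omega
  have ι_gt_iff : ∀ (x : ℚ) (i : Fin n), τ i < x ↔ 2 * (i : ℕ) + 1 < ι x := by
    intro x i
    constructor
    · intro hx
      have h1 : Finset.Iic i ⊆ (Finset.univ.filter fun j : Fin n => τ j ≤ x) := by
        intro j hj
        simp only [Finset.mem_Iic] at hj
        simp only [Finset.mem_filter, Finset.mem_univ, true_and]
        exact le_of_lt (lt_of_le_of_lt (hτ.monotone hj) hx)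
      have h2 : Finset.Iic i ⊆ (Finset.univ.filter fun j : Fin n => τ j < x) := by
        intro j hj
        simp only [Finset.mem_Iic] at hj
        simp only [Finset.mem_filter, Finset.mem_univ, true_and]
        exact lt_of_le_of_lt (hτ.monotone hj) hx
      have c1 := Finset.card_le_card h1
      have c2 := Finset.card_le_card h2
      rw [Fin.card_Iic] at c1 c2
      simp only [hι, iotaF]; omega
    · intro hx
      by_contra hcon
      push_neg at hcon
      have h1 : (Finset.univ.filter fun j : Fin n => τ j ≤ x) ⊆ Finset.Iic i := by
        intro j hj
        simp only [Finset.mem_filter] at hj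
        simp only [Finset.mem_Iic]
        exact hτ.le_iff_le.mp (le_trans hj.2 hcon)
      have h2 : (Finset.univ.filter fun j : Fin n => τ j < x) ⊆ Finset.Iio i := by
        intro j hj
        simp only [Finset.mem_filter] at hj
        simp only [Finset.mem_Iio]
        exact hτ.lt_iff_lt.mp (lt_of_lt_of_le hj.2 hcon)
      have c1 := Finset.card_le_card h1
      have c2 := Finset.card_le_card h2
      rw [Fin.card_Iic] at c1
      rw [Fin.card_Iio] at c2
      simp only [hι, iotaF] at hx; omega
  -- the discretization
  refine ⟨fun x => rep (ι x), ?_, ?_, ?_, ?_⟩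
  · intro x y hxy
    exact rep_mono (ι_mono x y hxy)
  · intro i
    have h1 : ¬ ι (τ i) < 2 * (i : ℕ) + 1 := by
      rw [← ι_lt_iff]; exact lt_irrefl _
    have h2 : ¬ 2 * (i : ℕ) + 1 < ι (τ i) := by
      rw [← ι_gt_iff]; exact lt_irrefl _
    have h3 : ι (τ i) = 2 * (i : ℕ) + 1 := by omega
    show rep (ι (τ i)) = τ i
    rw [h3, rep_fix]
  · intro x i
    have hle : ι x ≤ 2 * n := ι_le x
    have hi2 : 2 * (i : ℕ) + 1 ≤ 2 * n := by have := i.isLt; omega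
    have key1 : x < τ i ↔ rep (ι x) < τ i := by
      rw [ι_lt_iff x i, ← rep_fix i]
      constructor
      · intro h; exact rep_lt _ _ h hi2
      · intro h
        by_contra hcon
        push_neg at hcon
        exact absurd (rep_mono hcon) (not_le.mpr h)
    have key2 : τ i < x ↔ τ i < rep (ι x) := by
      rw [ι_gt_iff x i, ← rep_fix i]
      constructor
      · intro h; exact rep_lt _ _ h hle
      · intro h
        by_contra hcon
        push_neg at hcon
        exact absurd (rep_mono hcon) (not_le.mpr h)
    refine ⟨key1, key2, ?_⟩
    constructor
    · intro h
      have h1 : ¬ rep (ι x) < τ i := by rw [← key1, h]; exact lt_irrefl _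
      have h2 : ¬ τ i < rep (ι x) := by rw [← key2, h]; exact lt_irrefl _
      exact le_antisymm (not_lt.mp h2) (not_lt.mp h1)
    · intro h
      have h' : rep (ι x) = τ i := h
      have h1 : ¬ x < τ i := by rw [key1, h']; exact lt_irrefl _
      have h2 : ¬ τ i < x := by rw [key2, h']; exact lt_irrefl _
      exact le_antisymm (not_lt.mp h2) (not_lt.mp h1)
  · refine ⟨(Finset.range (2 * n + 1)).image rep, ?_, ?_⟩
    · intro x
      exact Finset.mem_image_of_mem rep (Finset.mem_range.mpr (by have := ι_le x; omega))
    · calc ((Finset.range (2 * n + 1)).image rep).card ≤ (Finset.range (2 * n + 1)).card :=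
        Finset.card_image_le
      _ = 2 * n + 1 := Finset.card_range _
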